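/- Let Π be a CNF theory, M a model of Π, and S the steady set of M for Π. A set of atoms E is erasable in M for Π if and only if E is erasable in M \ S for the simplified theory (simpl(Π,M))_{M\S}. -/
import Mathlib


structure Clause where
  head : Finset ℕ
  body : Finset ℕ
deriving DecidableEq

abbrev Theory := Finset Clause

/-- interpretation I satisfies clause c -/
def satC (I : Finset ℕ) (c : Clause) : Prop :=
  (c.head ∩ I).Nonempty ∨ ¬ c.body ⊆ I

def isModel (T : Theory) (I : Finset ℕ) : Prop := ∀ c ∈ T, satC I c

def isMinModel (T : Theory) (I : Finset ℕ) : Prop :=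
  isModel T I ∧ ∀ J ⊂ I, ¬ isModel T J

def Positive (T : Theory) : Prop := ∀ c ∈ T, c.head.Nonempty

def Horn (T : Theory) : Prop := ∀ c ∈ T, c.head.card = 1

/-- atoms occurring in a theory -/
def atoms (T : Theory) : Finset ℕ := T.biUnion (fun c => c.head ∪ c.body)

/-- c_{X←} : project head on X -/
def projHeadC (c : Clause) (X : Finset ℕ) : Clause := ⟨c.head ∩ X, c.body⟩
/-- c_X : project head and body on X -/
def projC (c : Clause) (X : Finset ℕ) : Clause := ⟨c.head ∩ X, c.body ∩ X⟩

/-- Π_{X←} -/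
def projHeadT (T : Theory) (X : Finset ℕ) : Theory :=
  (T.image (fun c => projHeadC c X)).filter (fun c => c.head.Nonempty)

/-- Π_X -/
def projT (T : Theory) (X : Finset ℕ) : Theory :=
  (T.image (fun c => projC c X)).filter (fun c => c.head.Nonempty)

/-- Π^{nd} : single-head fragment -/
def nd (T : Theory) : Theory := T.filter (fun c => c.head.card = 1)

/-- the steady set of M for Π is the minimal model of Π^{nd}_{M←} -/
def isSteady (T : Theory) (M S : Finset ℕ) : Prop :=
  isMinModel (nd (projHeadT T M)) S

def simpl (T : Theory) (M S : Finset ℕ) : Theory :=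
  T.filter (fun c => c.head ∩ S = ∅ ∧ c.body ⊆ M)

/-- simplified theory of Π w.r.t. M (with steady set S) -/
def simplT (T : Theory) (M S : Finset ℕ) : Theory := projT (simpl T M S) (M \ S)

/-- E erasable in M for T -/
def Erasable (T : Theory) (M E : Finset ℕ) : Prop :=
  E.Nonempty ∧ E ⊆ M ∧ isModel T (M \ E)

def Outbound (T : Theory) (Y Z : Finset ℕ) : Prop :=
  ∃ c ∈ T, (c.head ∩ Z).Nonempty ∧ (c.body ∩ (Y \ Z)).Nonempty ∧
    c.body ∩ Z = ∅ ∧ c.head ∩ (Y \ Z) = ∅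

def Elementary (T : Theory) (Y : Finset ℕ) : Prop :=
  Y.Nonempty ∧ Y ⊆ atoms T ∧ ∀ Z, Z ⊂ Y → Z.Nonempty → Outbound T Y Z

def HEF (T : Theory) : Prop :=
  ∀ c ∈ T, ∀ E, Elementary T E → (E ∩ c.head).card ≤ 1

def DisjunctiveSet (T : Theory) (S : Finset ℕ) : Prop :=
  ∃ c ∈ T, 1 < (c.head ∩ S).card

def SuperElementary (T : Theory) (X : Finset ℕ) : Prop :=
  Elementary T X ∧ ¬ Outbound T (atoms T) X

def posForm (T : Theory) (phi : ℕ) : Theory :=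
  T.filter (fun c => c.head.Nonempty) ∪
  (T.filter (fun c => c.head = ∅)).image (fun c => ⟨{phi}, c.body⟩) ∪
  (atoms T).image (fun a => ⟨{a}, {phi}⟩)

theorem stmt6 (T : Theory) (M S : Finset ℕ) (hM : isModel T M) (hS : isSteady T M S)
    (hSM : S ⊆ M) (E : Finset ℕ) :
    Erasable T M E ↔ Erasable (simplT T M S) (M \ S) E := by
  classical
  -- key steady property: any model of T contained in M contains S
  have key : ∀ N : Finset ℕ, N ⊆ M → isModel T N → S ⊆ N := by
    intro N hNM hN
    have hmod : isModel (nd (projHeadT T M)) (S ∩ N) := by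
      intro c hc
      simp only [nd, Finset.mem_filter, projHeadT, Finset.mem_image] at hc
      obtain ⟨⟨⟨c0, hc0, rfl⟩, -⟩, hcard⟩ := hc
      by_cases hB : c0.body ⊆ S ∩ N
      · left
        have hBN : c0.body ⊆ N := hB.trans Finset.inter_subset_right
        have hBS : c0.body ⊆ S := hB.trans Finset.inter_subset_left
        rcases hN c0 hc0 with hh | hb
        · obtain ⟨a, ha⟩ := hh
          rw [Finset.mem_inter] at ha
          have haM : a ∈ M := hNM ha.2
          have haHead : a ∈ (projHeadC c0 M).head :=
            Finset.mem_inter.mpr ⟨ha.1, haM⟩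
          obtain ⟨b, hb⟩ := Finset.card_eq_one.mp hcard
          rw [hb, Finset.mem_singleton] at haHead
          subst haHead
          rcases hS.1 _ (by
            simp only [nd, Finset.mem_filter, projHeadT, Finset.mem_image]
            exact ⟨⟨⟨c0, hc0, rfl⟩, by rw [hb]; exact Finset.singleton_nonempty a⟩, hcard⟩) with hh' | hb'
          · obtain ⟨x, hx⟩ := hh'
            rw [Finset.mem_inter, hb, Finset.mem_singleton] at hx
            obtain ⟨rfl, hxS⟩ := hx
            exact ⟨x, Finset.mem_inter.mpr ⟨by rw [hb]; exact Finset.mem_singleton_self x,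
              Finset.mem_inter.mpr ⟨hxS, ha.2⟩⟩⟩
          · exact absurd hBS hb'
        · exact absurd hBN hb
      · right; exact hB
    have hsub : S ∩ N ⊆ S := Finset.inter_subset_left
    by_cases heq : S ∩ N = S
    · intro a ha; rw [← heq] at ha
      exact (Finset.mem_inter.mp ha).2
    · exact absurd hmod (hS.2 (S ∩ N) (lt_of_le_of_ne hsub heq))
  constructor
  · rintro ⟨hne, hEM, hmodME⟩
    have hSME : S ⊆ M \ E := key (M \ E) (Finset.sdiff_subset) hmodME
    have hEMS : E ⊆ M \ S := by
      intro a ha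
      rw [Finset.mem_sdiff]
      refine ⟨hEM ha, fun haS => ?_⟩
      have := hSME haS
      rw [Finset.mem_sdiff] at this
      exact this.2 ha
    refine ⟨hne, hEMS, ?_⟩
    intro c' hc'
    simp only [simplT, projT, simpl, Finset.mem_filter, Finset.mem_image] at hc'
    obtain ⟨⟨c, hcmem, rfl⟩, -⟩ := hc'
    obtain ⟨hcT, hheadS, hbodyM⟩ := hcmem
    rcases hmodME c hcT with ⟨a, ha⟩ | hb
    · left
      rw [Finset.mem_inter, Finset.mem_sdiff] at ha
      obtain ⟨haH, haM, haE⟩ := ha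
      have haS : a ∉ S := fun h =>
        (Finset.notMem_empty a) (hheadS ▸ Finset.mem_inter.mpr ⟨haH, h⟩)
      exact ⟨a, by
        simp only [projC, Finset.mem_inter, Finset.mem_sdiff]
        exact ⟨⟨haH, haM, haS⟩, ⟨haM, haS⟩, haE⟩⟩
    · right
      intro hsub
      obtain ⟨x, hxB, hxnME⟩ := Finset.not_subset.mp hb
      have hxM : x ∈ M := hbodyM hxB
      have hxE : x ∈ E := by
        by_contra h; exact hxnME (Finset.mem_sdiff.mpr ⟨hxM, h⟩)
      have hxMS : x ∈ M \ S := hEMS hxE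
      have hx' : x ∈ (projC c (M \ S)).body := by
        simp only [projC, Finset.mem_inter]
        exact ⟨hxB, hxMS⟩
      have := hsub hx'
      rw [Finset.mem_sdiff] at this
      exact this.2 hxE
  · rintro ⟨hne, hEMS, hmodN⟩
    have hEM : E ⊆ M := hEMS.trans Finset.sdiff_subset
    have hES : ∀ a ∈ E, a ∉ S := fun a ha h =>
      (Finset.mem_sdiff.mp (hEMS ha)).2 h
    have hSME : S ⊆ M \ E := fun a ha =>
      Finset.mem_sdiff.mpr ⟨hSM ha, fun hE => hES a hE ha⟩
    refine ⟨hne, hEM, ?_⟩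
    intro c hc
    by_cases hh : (c.head ∩ S).Nonempty
    · left
      obtain ⟨a, ha⟩ := hh
      rw [Finset.mem_inter] at ha
      exact ⟨a, Finset.mem_inter.mpr ⟨ha.1, hSME ha.2⟩⟩
    · by_cases hbM : c.body ⊆ M
      · have hheadS : c.head ∩ S = ∅ := Finset.not_nonempty_iff_eq_empty.mp hh
        by_cases hhMS : (c.head ∩ (M \ S)).Nonempty
        · have hc' : projC c (M \ S) ∈ simplT T M S := by
            simp only [simplT, projT, simpl, Finset.mem_filter, Finset.mem_image]
            exact ⟨⟨c, ⟨hc, hheadS, hbM⟩, rfl⟩, hhMS⟩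
          rcases hmodN _ hc' with ⟨a, ha⟩ | hb
          · left
            simp only [projC, Finset.mem_inter, Finset.mem_sdiff] at ha
            obtain ⟨⟨haH, -⟩, ⟨haM, -⟩, haE⟩ := ha
            exact ⟨a, Finset.mem_inter.mpr ⟨haH, Finset.mem_sdiff.mpr ⟨haM, haE⟩⟩⟩
          · right
            intro hsub
            apply hb
            intro x hx
            simp only [projC, Finset.mem_inter] at hx
            obtain ⟨hxB, hxMS⟩ := hx
            have := hsub hxB
            rw [Finset.mem_sdiff] at this hxMS
            exact Finset.mem_sdiff.mpr ⟨Finset.mem_sdiff.mpr hxMS, this.2⟩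
        · exfalso
          have hheadM : c.head ∩ M = ∅ := by
            rw [Finset.eq_empty_iff_forall_notMem]
            intro a ha
            rw [Finset.mem_inter] at ha
            by_cases haS : a ∈ S
            · exact hh ⟨a, Finset.mem_inter.mpr ⟨ha.1, haS⟩⟩
            · exact hhMS ⟨a, Finset.mem_inter.mpr ⟨ha.1, Finset.mem_sdiff.mpr ⟨ha.2, haS⟩⟩⟩
          rcases hM c hc with hh' | hb'
          · rw [hheadM] at hh'; exact Finset.not_nonempty_empty hh'
          · exact hb' hbM
      · right
        intro hsub
        exact hbM (hsub.trans Finset.sdiff_subset)
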